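/- arXiv:1506.02649 — 2 statements merged into one kernel-verified Lean document; each statement's English description precedes it below -/
import Mathlib

section
/- In the setting of conditioned SGD, let C = U D Uᵀ be an eigenvalue decomposition of C = (1/m) Σ x_i x_iᵀ with eigenvalues λ₁ ≥ … ≥ λₙ on the diagonal of D, assume λ_k > 0 and tr(C) > tr(C_k) where C_k = U_k D_k U_kᵀ is the best rank-k approximation of C (U_k the first k columns of U, D_k the top-left k×k block of D). Run the algorithm with conditioner A = Q B Qᵀ + a(I − QQᵀ) where Q = U_k, B = (Qᵀ C Q)^{1/2}, a = √((tr(C) − tr(QᵀCQ))/(n−k)), and learning rate η = σ/(ρ√T) with σ ≥ ‖W*‖_spectral. Then E[L(W̄) − L(W*)] ≤ (σρ/√T) · ( tr(C_k^{1/2}) + √((n−k)(tr(C) − tr(C_k))) ). -/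
open Matrix BigOperators


lemma sqrt_quad_bound {t ρ : ℝ} (ht : 0 ≤ t) (h : t ≤ ρ * Real.sqrt t) : t ≤ ρ ^ 2 := by
  nlinarith [Real.sq_sqrt ht, Real.sqrt_nonneg t, sq_nonneg (Real.sqrt t - ρ)]

lemma aux_avg {T m : ℕ} (t : Fin T) (F : (Fin T → Fin m) → Fin m → ℝ)
    (hF : ∀ ω ω' : Fin T → Fin m, (∀ u, u ≠ t → ω u = ω' u) → ∀ j, F ω j = F ω' j) :
    (m : ℝ) * ∑ ω, F ω (ω t) = ∑ ω, ∑ j, F ω j := by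
  classical
  set e := Equiv.funSplitAt t (Fin m) with he
  have hsymt : ∀ q : Fin m × ({ j // j ≠ t } → Fin m), e.symm q t = q.1 := by
    intro q; simp [he, Equiv.funSplitAt, Equiv.piSplitAt]
  have hsymo : ∀ (q : Fin m × ({ j // j ≠ t } → Fin m)) (u : Fin T) (hu : u ≠ t),
      e.symm q u = q.2 ⟨u, hu⟩ := by
    intro q u hu; simp [he, Equiv.funSplitAt, Equiv.piSplitAt, hu]
  have key : ∀ (v v' : Fin m) (r : { j // j ≠ t } → Fin m) (j : Fin m),
      F (e.symm (v, r)) j = F (e.symm (v', r)) j := by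
    intro v v' r j
    refine hF _ _ (fun u hu => ?_) j
    rw [hsymo (v, r) u hu, hsymo (v', r) u hu]
  rw [← e.symm.sum_comp (fun ω => F ω (ω t)), ← e.symm.sum_comp (fun ω => ∑ j, F ω j)]
  rw [Fintype.sum_prod_type, Fintype.sum_prod_type]
  simp only [hsymt]
  calc (m : ℝ) * ∑ v : Fin m, ∑ r, F (e.symm (v, r)) v
      = ∑ v : Fin m, ∑ r, ∑ j : Fin m, F (e.symm (j, r)) j := by
        rw [Finset.sum_comm, Finset.sum_const, Finset.card_univ, Fintype.card_fin,
          nsmul_eq_mul]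
    _ = ∑ v : Fin m, ∑ r, ∑ j, F (e.symm (v, r)) j := by
        refine Finset.sum_congr rfl fun v _ => Finset.sum_congr rfl fun r _ =>
          Finset.sum_congr rfl fun j _ => (key j v r j)

lemma trace_vmv {α β : Type*} [Fintype α] [Fintype β] (u : α → ℝ) (y : β → ℝ)
    (M : Matrix β α ℝ) :
    (Matrix.vecMulVec u y * M).trace = ∑ r, u r * ∑ i, y i * M i r := by
  simp [Matrix.trace, Matrix.diag, Matrix.mul_apply, Matrix.vecMulVec_apply, Finset.mul_sum,
    mul_assoc]

lemma quad_expand {n p : ℕ} (A : Matrix (Fin n) (Fin n) ℝ) (hA : Aᵀ = A)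
    (V G : Matrix (Fin p) (Fin n) ℝ) (η : ℝ) :
    ((V - η • G) * A * (V - η • G)ᵀ).trace
      = (V * A * Vᵀ).trace - 2 * η * (G * A * Vᵀ).trace + η ^ 2 * (G * A * Gᵀ).trace := by
  have h1 : (V * A * Gᵀ).trace = (G * A * Vᵀ).trace := by
    rw [← Matrix.trace_transpose (V * A * Gᵀ)]
    simp [Matrix.transpose_mul, Matrix.mul_assoc, hA]
  simp only [Matrix.transpose_sub, Matrix.transpose_smul, Matrix.sub_mul, Matrix.mul_sub,
    Matrix.trace_sub, Matrix.smul_mul, Matrix.mul_smul, Matrix.trace_smul, h1, smul_eq_mul,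
    smul_smul]
  ring

lemma quad_form_nonneg {n : ℕ} {ι : Type*} [Fintype ι] (S : Matrix (Fin n) ι ℝ) (v : Fin n → ℝ) :
    0 ≤ v ⬝ᵥ ((S * Sᵀ) *ᵥ v) := by
  have h : v ⬝ᵥ ((S * Sᵀ) *ᵥ v) = (v ᵥ* S) ⬝ᵥ (v ᵥ* S) := by
    rw [← Matrix.mulVec_mulVec, Matrix.mulVec_transpose, Matrix.dotProduct_mulVec]
  rw [h]
  exact Finset.sum_nonneg fun i _ => mul_self_nonneg _

lemma trace_mul_transpose_self {α β : Type*} [Fintype α] [Fintype β] (M : Matrix α β ℝ) :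
    (M * Mᵀ).trace = ∑ r, ∑ l, (M r l) ^ 2 := by
  simp [Matrix.trace, Matrix.diag, Matrix.mul_apply, sq]

lemma trace_quad_nonneg {p n : ℕ} {ι : Type*} [Fintype ι]
    (S : Matrix (Fin n) ι ℝ) (V : Matrix (Fin p) (Fin n) ℝ) :
    0 ≤ (V * (S * Sᵀ) * Vᵀ).trace := by
  have h : V * (S * Sᵀ) * Vᵀ = (V * S) * (V * S)ᵀ := by
    simp [Matrix.transpose_mul, Matrix.mul_assoc]
  rw [h, trace_mul_transpose_self]
  positivity

lemma trace_quad_sigma {p n : ℕ} {ι : Type*} [Fintype ι] {Wstar : Matrix (Fin p) (Fin n) ℝ}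
    {σ : ℝ}
    (hσ : ∀ v : Fin n → ℝ,
      Real.sqrt (∑ j, ((Wstar *ᵥ v) j) ^ 2) ≤ σ * Real.sqrt (∑ i, (v i) ^ 2))
    (S : Matrix (Fin n) ι ℝ) :
    (Wstar * (S * Sᵀ) * Wstarᵀ).trace ≤ σ ^ 2 * (Sᵀ * S).trace := by
  have h : Wstar * (S * Sᵀ) * Wstarᵀ = (Wstar * S) * (Wstar * S)ᵀ := by
    simp [Matrix.transpose_mul, Matrix.mul_assoc]
  have hT : (Sᵀ * S).trace = ∑ l, ∑ i, (S i l) ^ 2 := by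
    have : Sᵀ * S = Sᵀ * (Sᵀ)ᵀ := by rw [Matrix.transpose_transpose]
    rw [this, trace_mul_transpose_self]
    simp [Matrix.transpose_apply]
  rw [h, trace_mul_transpose_self, hT, Finset.sum_comm, Finset.mul_sum]
  refine Finset.sum_le_sum fun l _ => ?_
  set v : Fin n → ℝ := fun i => S i l with hv
  have hrow : ∀ r, (Wstar * S) r l = (Wstar *ᵥ v) r := by
    intro r; simp [Matrix.mul_apply, Matrix.mulVec, dotProduct, hv]
  have ha : (0:ℝ) ≤ ∑ r, ((Wstar *ᵥ v) r) ^ 2 := Finset.sum_nonneg fun _ _ => sq_nonneg _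
  have hb : (0:ℝ) ≤ ∑ i, (v i) ^ 2 := Finset.sum_nonneg fun _ _ => sq_nonneg _
  calc ∑ r, ((Wstar * S) r l) ^ 2 = ∑ r, ((Wstar *ᵥ v) r) ^ 2 := by
        simp only [hrow]
    _ = (Real.sqrt (∑ r, ((Wstar *ᵥ v) r) ^ 2)) ^ 2 := (Real.sq_sqrt ha).symm
    _ ≤ (σ * Real.sqrt (∑ i, (v i) ^ 2)) ^ 2 :=
        pow_le_pow_left₀ (Real.sqrt_nonneg _) (hσ v) 2
    _ = σ ^ 2 * ∑ i, (v i) ^ 2 := by rw [mul_pow, Real.sq_sqrt hb]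

lemma trace_mul_vmv {n : ℕ} (M : Matrix (Fin n) (Fin n) ℝ) (hM : Mᵀ = M) (v : Fin n → ℝ) :
    (M * Matrix.vecMulVec v v).trace = v ⬝ᵥ (M *ᵥ v) := by
  rw [Matrix.trace_mul_comm, trace_vmv]
  have hsym : ∀ i r, M i r = M r i := by
    intro i r; rw [← Matrix.transpose_apply M r i, hM]
  simp only [dotProduct, Matrix.mulVec, Finset.mul_sum]
  refine Finset.sum_congr rfl fun r _ => Finset.sum_congr rfl fun i _ => ?_
  rw [hsym i r]; ring

set_option maxHeartbeats 1000000 in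
lemma conditioner_facts {n p k : ℕ} (hkn : k < n)
    (Wstar : Matrix (Fin p) (Fin n) ℝ) (σ : ℝ)
    (hσ : ∀ v : Fin n → ℝ,
      Real.sqrt (∑ j, ((Wstar *ᵥ v) j) ^ 2) ≤ σ * Real.sqrt (∑ i, (v i) ^ 2))
    (C : Matrix (Fin n) (Fin n) ℝ)
    (U : Matrix (Fin n) (Fin n) ℝ) (hU : Uᵀ * U = 1)
    (d : Fin n → ℝ)
    (hCdec : C = U * Matrix.diagonal d * Uᵀ)
    (hlamk : ∀ i : Fin k, 0 < d (Fin.castLE hkn.le i))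
    (Q : Matrix (Fin n) (Fin k) ℝ)
    (hQ : Q = U.submatrix id (Fin.castLE hkn.le))
    (Ck : Matrix (Fin n) (Fin n) ℝ)
    (hCk : Ck = Q * Matrix.diagonal (fun i : Fin k => d (Fin.castLE hkn.le i)) * Qᵀ)
    (htr : Ck.trace < C.trace)
    (B : Matrix (Fin k) (Fin k) ℝ) (hBpsd : B.PosSemidef) (hBsq : B * B = Qᵀ * C * Q)
    (a : ℝ) (ha : a = Real.sqrt ((C.trace - (Qᵀ * C * Q).trace) / ((n : ℝ) - (k : ℝ))))
    (A : Matrix (Fin n) (Fin n) ℝ)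
    (hA : A = Q * B * Qᵀ + a • (1 - Q * Qᵀ)) :
    Aᵀ = A ∧ A * A⁻¹ = 1 ∧ A⁻¹ᵀ = A⁻¹ ∧
    (∀ V : Matrix (Fin p) (Fin n) ℝ, 0 ≤ (V * A * Vᵀ).trace) ∧
    (∀ v : Fin n → ℝ, 0 ≤ v ⬝ᵥ (A⁻¹ *ᵥ v)) ∧
    (Wstar * A * Wstarᵀ).trace ≤ σ ^ 2 * A.trace ∧
    A.trace = (∑ i : Fin k, Real.sqrt (d (Fin.castLE hkn.le i)))
        + Real.sqrt (((n : ℝ) - (k : ℝ)) * (C.trace - Ck.trace)) ∧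
    (A⁻¹ * C).trace = A.trace := by
  classical
  set c : Fin k → Fin n := Fin.castLE hkn.le with hc
  have injc : Function.Injective c := Fin.castLE_injective _
  set dk : Fin k → ℝ := fun i => d (c i) with hdk
  have dkpos : ∀ i, 0 < dk i := hlamk
  -- Q is orthonormal
  have hQtQ : Qᵀ * Q = 1 := by
    rw [hQ, Matrix.transpose_submatrix]
    calc Uᵀ.submatrix c id * U.submatrix id c
        = (Uᵀ * U).submatrix c c := (Matrix.submatrix_mul Uᵀ U c id c Function.bijective_id).symm
      _ = 1 := by rw [hU]; exact Matrix.submatrix_one c injc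
  have hQtU : Qᵀ * U = (1 : Matrix (Fin n) (Fin n) ℝ).submatrix c id := by
    rw [hQ, Matrix.transpose_submatrix]
    calc Uᵀ.submatrix c id * U
        = Uᵀ.submatrix c id * U.submatrix id id := by rw [Matrix.submatrix_id_id]
      _ = (Uᵀ * U).submatrix c id := (Matrix.submatrix_mul Uᵀ U c id id Function.bijective_id).symm
      _ = _ := by rw [hU]
  have hUtQ : Uᵀ * Q = (1 : Matrix (Fin n) (Fin n) ℝ).submatrix id c := by
    rw [hQ]
    calc Uᵀ * U.submatrix id c
        = Uᵀ.submatrix id id * U.submatrix id c := by rw [Matrix.submatrix_id_id]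
      _ = (Uᵀ * U).submatrix id c := (Matrix.submatrix_mul Uᵀ U id id c Function.bijective_id).symm
      _ = _ := by rw [hU]
  have hQCQ : Qᵀ * C * Q = Matrix.diagonal dk := by
    rw [hCdec]
    have e1 : Qᵀ * (U * Matrix.diagonal d * Uᵀ) * Q
        = (Qᵀ * U) * Matrix.diagonal d * (Uᵀ * Q) := by
      simp only [Matrix.mul_assoc]
    rw [e1, hQtU, hUtQ]
    have e2 : (1 : Matrix (Fin n) (Fin n) ℝ).submatrix c id * Matrix.diagonal d
        = (Matrix.diagonal d).submatrix c id := by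
      calc (1 : Matrix (Fin n) (Fin n) ℝ).submatrix c id * Matrix.diagonal d
          = (1 : Matrix (Fin n) (Fin n) ℝ).submatrix c id * (Matrix.diagonal d).submatrix id id := by
            rw [Matrix.submatrix_id_id]
        _ = (1 * Matrix.diagonal d).submatrix c id :=
            (Matrix.submatrix_mul _ _ c id id Function.bijective_id).symm
        _ = _ := by rw [Matrix.one_mul]
    rw [e2]
    calc (Matrix.diagonal d).submatrix c id * (1 : Matrix (Fin n) (Fin n) ℝ).submatrix id c
        = (Matrix.diagonal d * 1).submatrix c c :=
          (Matrix.submatrix_mul _ _ c id c Function.bijective_id).symm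
      _ = (Matrix.diagonal d).submatrix c c := by rw [Matrix.mul_one]
      _ = Matrix.diagonal dk := Matrix.submatrix_diagonal d c injc
  -- identify B with the diagonal square root
  have sqrt_dk_pos : ∀ i, 0 < Real.sqrt (dk i) := fun i => Real.sqrt_pos.mpr (dkpos i)
  set Bd : Matrix (Fin k) (Fin k) ℝ := Matrix.diagonal (fun i => Real.sqrt (dk i)) with hBd
  have hDkpsd : (Matrix.diagonal dk).PosSemidef :=
    Matrix.PosSemidef.diagonal (fun i => (dkpos i).le)
  have hBdpsd : Bd.PosSemidef := Matrix.PosSemidef.diagonal (fun i => Real.sqrt_nonneg _)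
  have hBdsq : Bd ^ 2 = Matrix.diagonal dk := by
    rw [hBd, pow_two, Matrix.diagonal_mul_diagonal,
      show (fun i => Real.sqrt (dk i) * Real.sqrt (dk i)) = dk from
        funext fun i => Real.mul_self_sqrt (dkpos i).le]
  have hBsq' : B ^ 2 = Matrix.diagonal dk := by rw [pow_two, hBsq, hQCQ]
  have hB : B = Bd := by
    open scoped MatrixOrder in
    exact (CFC.sq_eq_sq_iff B Bd hBpsd.nonneg hBdpsd.nonneg).mp (hBsq'.trans hBdsq.symm)
  -- the orthogonal projection P
  set P : Matrix (Fin n) (Fin n) ℝ := 1 - Q * Qᵀ with hP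
  have hQtP : Qᵀ * P = 0 := by
    rw [hP, Matrix.mul_sub, Matrix.mul_one, ← Matrix.mul_assoc, hQtQ, Matrix.one_mul, sub_self]
  have hPQ : P * Q = 0 := by
    rw [hP, Matrix.sub_mul, Matrix.one_mul, Matrix.mul_assoc, hQtQ, Matrix.mul_one, sub_self]
  have hPt : Pᵀ = P := by
    rw [hP]; simp [Matrix.transpose_sub, Matrix.transpose_mul]
  have hPP : P * P = P := by
    nth_rewrite 1 [hP]
    rw [Matrix.sub_mul, Matrix.one_mul, Matrix.mul_assoc, hQtP, Matrix.mul_zero, sub_zero]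
  have trace_QMQ : ∀ M : Matrix (Fin k) (Fin k) ℝ, (Q * M * Qᵀ).trace = M.trace := by
    intro M
    rw [Matrix.mul_assoc, Matrix.trace_mul_comm, Matrix.mul_assoc, hQtQ, Matrix.mul_one]
  have htrP : P.trace = (n : ℝ) - k := by
    rw [hP, Matrix.trace_sub, Matrix.trace_one, Matrix.trace_mul_comm, hQtQ, Matrix.trace_one]
    simp
  -- scalars
  set ν : ℝ := (n : ℝ) - k with hν
  have νpos : 0 < ν := by
    rw [hν]; have : (k : ℝ) < n := by exact_mod_cast hkn
    linarith
  have htrCk : Ck.trace = ∑ i, dk i := by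
    rw [hCk, trace_QMQ, Matrix.trace_diagonal]
  set s : ℝ := C.trace - Ck.trace with hs
  have spos : 0 < s := by rw [hs]; linarith
  have ha' : a = Real.sqrt (s / ν) := by
    rw [ha, hQCQ, Matrix.trace_diagonal]
    rw [show (∑ i, dk i) = Ck.trace from htrCk.symm]
  have apos : 0 < a := by rw [ha']; exact Real.sqrt_pos.mpr (div_pos spos νpos)
  have hsqν : Real.sqrt ν * Real.sqrt ν = ν := Real.mul_self_sqrt νpos.le
  have hsqs : Real.sqrt s * Real.sqrt s = s := Real.mul_self_sqrt spos.le
  have hsνmul : Real.sqrt (ν * s) = Real.sqrt ν * Real.sqrt s := Real.sqrt_mul νpos.le s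
  have hsνne : Real.sqrt ν ≠ 0 := (Real.sqrt_pos.mpr νpos).ne'
  have hssne : Real.sqrt s ≠ 0 := (Real.sqrt_pos.mpr spos).ne'
  have haν : a * ν = Real.sqrt (ν * s) := by
    rw [ha', Real.sqrt_div spos.le, hsνmul, div_mul_eq_mul_div, div_eq_iff hsνne]
    linear_combination (-Real.sqrt s) * hsqν
  have hais : a⁻¹ * s = Real.sqrt (ν * s) := by
    rw [ha', Real.sqrt_div spos.le, hsνmul, inv_div, div_mul_eq_mul_div, div_eq_iff hssne]
    linear_combination (-Real.sqrt ν) * hsqs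
  -- the inverse of A
  set Bd' : Matrix (Fin k) (Fin k) ℝ := Matrix.diagonal (fun i => (Real.sqrt (dk i))⁻¹) with hBd'
  have hDD : Bd * Bd' = 1 := by
    rw [hBd, hBd', Matrix.diagonal_mul_diagonal,
      show (fun i => Real.sqrt (dk i) * (Real.sqrt (dk i))⁻¹) = fun _ => (1:ℝ) from
        funext fun i => mul_inv_cancel₀ (sqrt_dk_pos i).ne',
      Matrix.diagonal_one]
  have hBdt : Bdᵀ = Bd := by rw [hBd]; exact Matrix.diagonal_transpose _
  have hBd't : Bd'ᵀ = Bd' := by rw [hBd']; exact Matrix.diagonal_transpose _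
  set Ai : Matrix (Fin n) (Fin n) ℝ := Q * Bd' * Qᵀ + a⁻¹ • P with hAi
  have r1 : Qᵀ * (Q * (Bd' * Qᵀ)) = Bd' * Qᵀ := by
    rw [← Matrix.mul_assoc, hQtQ, Matrix.one_mul]
  have r2 : Bd * (Bd' * Qᵀ) = Qᵀ := by
    rw [← Matrix.mul_assoc, hDD, Matrix.one_mul]
  have r4 : P * (Q * (Bd' * Qᵀ)) = 0 := by
    rw [← Matrix.mul_assoc P Q (Bd' * Qᵀ), hPQ, Matrix.zero_mul]
  have hright : A * Ai = 1 := by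
    rw [hA, hAi, hB]
    simp only [Matrix.add_mul, Matrix.mul_add, Matrix.smul_mul, Matrix.mul_smul, smul_smul,
      Matrix.mul_assoc, r1, r2, r4, hQtP, hPP, Matrix.mul_zero, Matrix.zero_mul, smul_zero,
      add_zero, zero_add, mul_inv_cancel₀ apos.ne', inv_mul_cancel₀ apos.ne', one_smul]
    rw [hP]
    abel
  have hAinv : A⁻¹ = Ai := Matrix.inv_eq_right_inv hright
  have hAAinv : A * A⁻¹ = 1 := by rw [hAinv]; exact hright
  -- symmetry
  have hAsymm : Aᵀ = A := by
    rw [hA, hB]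
    simp [Matrix.transpose_add, Matrix.transpose_smul, Matrix.transpose_mul,
      Matrix.transpose_transpose, Matrix.diagonal_transpose, hPt, hBdt, Matrix.mul_assoc]
  have hAinvsymm : A⁻¹ᵀ = A⁻¹ := by
    rw [hAinv, hAi]
    simp [Matrix.transpose_add, Matrix.transpose_smul, Matrix.transpose_mul,
      Matrix.transpose_transpose, Matrix.diagonal_transpose, hPt, hBd't, Matrix.mul_assoc]
  -- traces
  have htrA : A.trace = (∑ i, Real.sqrt (dk i)) + a * ν := by
    rw [hA, hB, Matrix.trace_add, Matrix.trace_smul, trace_QMQ, hBd, Matrix.trace_diagonal, htrP]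
    simp [smul_eq_mul, hν]
  have e1 : (Q * Bd' * Qᵀ * C).trace = ∑ i, Real.sqrt (dk i) := by
    rw [Matrix.mul_assoc (Q * Bd') Qᵀ C, Matrix.mul_assoc Q Bd' (Qᵀ * C),
      Matrix.trace_mul_comm, Matrix.mul_assoc Bd' (Qᵀ * C) Q, hQCQ, hBd',
      Matrix.diagonal_mul_diagonal, Matrix.trace_diagonal]
    refine Finset.sum_congr rfl fun i _ => ?_
    rw [inv_mul_eq_div, div_eq_iff (sqrt_dk_pos i).ne']
    exact (Real.mul_self_sqrt (dkpos i).le).symm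
  have e2 : (P * C).trace = s := by
    rw [hP, Matrix.sub_mul, Matrix.one_mul, Matrix.trace_sub, Matrix.mul_assoc,
      Matrix.trace_mul_comm Q (Qᵀ * C), Matrix.mul_assoc Qᵀ C Q]
    rw [show Qᵀ * (C * Q) = Qᵀ * C * Q from (Matrix.mul_assoc Qᵀ C Q).symm, hQCQ,
      Matrix.trace_diagonal, show (∑ i, dk i) = Ck.trace from htrCk.symm, hs]
  have htrAiC : (A⁻¹ * C).trace = (∑ i, Real.sqrt (dk i)) + a⁻¹ * s := by
    rw [hAinv, hAi, Matrix.add_mul, Matrix.trace_add, Matrix.smul_mul, Matrix.trace_smul, e1, e2]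
    simp [smul_eq_mul]
  -- factorizations
  have sq2 : (fun i => Real.sqrt (Real.sqrt (dk i)) * Real.sqrt (Real.sqrt (dk i)))
      = fun i => Real.sqrt (dk i) := funext fun i => Real.mul_self_sqrt (Real.sqrt_nonneg _)
  have sq3 : (fun i => Real.sqrt ((Real.sqrt (dk i))⁻¹) * Real.sqrt ((Real.sqrt (dk i))⁻¹))
      = fun i => (Real.sqrt (dk i))⁻¹ :=
    funext fun i => Real.mul_self_sqrt (inv_nonneg.mpr (Real.sqrt_nonneg _))
  set M1 : Matrix (Fin n) (Fin k) ℝ :=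
    Q * Matrix.diagonal (fun i => Real.sqrt (Real.sqrt (dk i))) with hM1
  set M3 : Matrix (Fin n) (Fin k) ℝ :=
    Q * Matrix.diagonal (fun i => Real.sqrt ((Real.sqrt (dk i))⁻¹)) with hM3
  have hM1fac : M1 * M1ᵀ = Q * Bd * Qᵀ := by
    rw [hM1, Matrix.transpose_mul, Matrix.diagonal_transpose, Matrix.mul_assoc,
      ← Matrix.mul_assoc (Matrix.diagonal _) (Matrix.diagonal _) Qᵀ,
      Matrix.diagonal_mul_diagonal, sq2, hBd, Matrix.mul_assoc]
  have hM3fac : M3 * M3ᵀ = Q * Bd' * Qᵀ := by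
    rw [hM3, Matrix.transpose_mul, Matrix.diagonal_transpose, Matrix.mul_assoc,
      ← Matrix.mul_assoc (Matrix.diagonal _) (Matrix.diagonal _) Qᵀ,
      Matrix.diagonal_mul_diagonal, sq3, hBd', Matrix.mul_assoc]
  have hPfac : P * Pᵀ = P := by rw [hPt, hPP]
  have hAfac : A = M1 * M1ᵀ + a • (P * Pᵀ) := by rw [hM1fac, hPfac, hA, hB]
  have hAifac : A⁻¹ = M3 * M3ᵀ + a⁻¹ • (P * Pᵀ) := by rw [hM3fac, hPfac, hAinv, hAi]
  have htrM1 : (M1ᵀ * M1).trace = ∑ i, Real.sqrt (dk i) := by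
    rw [hM1, Matrix.transpose_mul, Matrix.diagonal_transpose, Matrix.mul_assoc,
      ← Matrix.mul_assoc Qᵀ Q (Matrix.diagonal _), hQtQ, Matrix.one_mul,
      Matrix.diagonal_mul_diagonal, sq2, Matrix.trace_diagonal]
  have htrPtP : (Pᵀ * P).trace = ν := by rw [hPt, hPP, htrP, hν]
  -- psd facts
  have hquadA : ∀ V : Matrix (Fin p) (Fin n) ℝ, 0 ≤ (V * A * Vᵀ).trace := by
    intro V
    rw [hAfac, Matrix.mul_add, Matrix.add_mul, Matrix.trace_add, Matrix.mul_smul,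
      Matrix.smul_mul, Matrix.trace_smul, smul_eq_mul]
    exact add_nonneg (trace_quad_nonneg M1 V)
      (mul_nonneg apos.le (trace_quad_nonneg P V))
  have hquadAi : ∀ v : Fin n → ℝ, 0 ≤ v ⬝ᵥ (A⁻¹ *ᵥ v) := by
    intro v
    rw [hAifac, Matrix.add_mulVec, Matrix.smul_mulVec, dotProduct_add,
      dotProduct_smul, smul_eq_mul]
    exact add_nonneg (quad_form_nonneg M3 v)
      (mul_nonneg (inv_nonneg.mpr apos.le) (quad_form_nonneg P v))
  have hsigma : (Wstar * A * Wstarᵀ).trace ≤ σ ^ 2 * A.trace := by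
    have b1 := trace_quad_sigma hσ M1
    have b2 := trace_quad_sigma hσ P
    rw [htrM1] at b1
    rw [htrPtP] at b2
    have expand : (Wstar * A * Wstarᵀ).trace
        = (Wstar * (M1 * M1ᵀ) * Wstarᵀ).trace + a * (Wstar * (P * Pᵀ) * Wstarᵀ).trace := by
      nth_rewrite 1 [hAfac]
      rw [Matrix.mul_add, Matrix.add_mul, Matrix.trace_add, Matrix.mul_smul,
        Matrix.smul_mul, Matrix.trace_smul, smul_eq_mul]
    have b2' : a * (Wstar * (P * Pᵀ) * Wstarᵀ).trace ≤ a * (σ ^ 2 * ν) :=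
      mul_le_mul_of_nonneg_left b2 apos.le
    rw [expand, htrA]
    calc (Wstar * (M1 * M1ᵀ) * Wstarᵀ).trace + a * (Wstar * (P * Pᵀ) * Wstarᵀ).trace
        ≤ σ ^ 2 * (∑ i, Real.sqrt (dk i)) + a * (σ ^ 2 * ν) := add_le_add b1 b2'
      _ = σ ^ 2 * ((∑ i, Real.sqrt (dk i)) + a * ν) := by ring
  refine ⟨hAsymm, hAAinv, hAinvsymm, hquadA, hquadAi, hsigma, ?_, ?_⟩
  · rw [htrA, haν]
  · rw [htrAiC, hais, htrA, haν]

/-- Theorem 3 of the paper. Conditioned SGD with the low-rank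
conditioner built from the exact best rank-`k` approximation of
`C = U D Uᵀ` (eigenvalues `d` decreasing, `λ_k > 0`): taking `Q = U_k`
(the first `k` columns of `U`), `B = (Qᵀ C Q)^{1/2}`,
`a = √((tr(C) − tr(Qᵀ C Q))/(n−k))`, `A = Q B Qᵀ + a(I − QQᵀ)` and learning
rate `η = σ/(ρ√T)` with `σ ≥ ‖W*‖_spectral`, one gets
`E[L(W̄) − L(W*)] ≤ (σρ/√T) (tr(C_k^{1/2}) + √((n−k)(tr(C) − tr(C_k))))`,
where `C_k = U_k D_k U_kᵀ` and `tr(C_k^{1/2}) = Σ_{i<k} √λᵢ`. -/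
theorem stmt12 {n p m k : ℕ} (hm : 0 < m) (hkn : k < n)
    (x : Fin m → Fin n → ℝ) (ρ : ℝ) (hρ : 0 < ρ)
    (ℓ : Fin m → (Fin p → ℝ) → ℝ)
    (hconv : ∀ i, ConvexOn ℝ Set.univ (ℓ i))
    (hlip : ∀ i, ∀ u v : Fin p → ℝ,
      |ℓ i u - ℓ i v| ≤ ρ * Real.sqrt (∑ j, (u j - v j) ^ 2))
    (L : Matrix (Fin p) (Fin n) ℝ → ℝ)
    (hL : ∀ W, L W = (1 / (m : ℝ)) * ∑ i, ℓ i (W *ᵥ x i))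
    (Wstar : Matrix (Fin p) (Fin n) ℝ)
    (hWstar : ∀ W, L Wstar ≤ L W)
    (σ : ℝ)
    (hσ : ∀ v : Fin n → ℝ,
      Real.sqrt (∑ j, ((Wstar *ᵥ v) j) ^ 2) ≤ σ * Real.sqrt (∑ i, (v i) ^ 2))
    (C : Matrix (Fin n) (Fin n) ℝ)
    (hC : C = (1 / (m : ℝ)) • ∑ i, Matrix.vecMulVec (x i) (x i))
    -- eigenvalue decomposition `C = U D Uᵀ` with decreasing eigenvalues `d`
    (U : Matrix (Fin n) (Fin n) ℝ) (hU : Uᵀ * U = 1)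
    (d : Fin n → ℝ) (hd : Antitone d)
    (hCdec : C = U * Matrix.diagonal d * Uᵀ)
    -- `λ_k > 0`, i.e. the top `k` eigenvalues are positive
    (hlamk : ∀ i : Fin k, 0 < d (Fin.castLE hkn.le i))
    -- `Q = U_k`, `C_k = U_k D_k U_kᵀ`
    (Q : Matrix (Fin n) (Fin k) ℝ)
    (hQ : Q = U.submatrix id (Fin.castLE hkn.le))
    (Ck : Matrix (Fin n) (Fin n) ℝ)
    (hCk : Ck = Q * Matrix.diagonal (fun i : Fin k => d (Fin.castLE hkn.le i)) * Qᵀ)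
    (htr : Ck.trace < C.trace)
    -- `B = (Qᵀ C Q)^{1/2}`, the PSD square root
    (B : Matrix (Fin k) (Fin k) ℝ)
    (hBpsd : B.PosSemidef) (hBsq : B * B = Qᵀ * C * Q)
    (a : ℝ)
    (ha : a = Real.sqrt ((C.trace - (Qᵀ * C * Q).trace) / ((n : ℝ) - (k : ℝ))))
    (A : Matrix (Fin n) (Fin n) ℝ)
    (hA : A = Q * B * Qᵀ + a • (1 - Q * Qᵀ))
    (T : ℕ) (hT : 0 < T)
    (η : ℝ) (hη : η = σ / (ρ * Real.sqrt T))
    (g : Matrix (Fin p) (Fin n) ℝ → Fin m → (Fin p → ℝ))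
    (hg : ∀ W' i, ∀ u : Fin p → ℝ,
      ℓ i (W' *ᵥ x i) + ∑ j, g W' i j * (u j - (W' *ᵥ x i) j) ≤ ℓ i u)
    (W : (Fin T → Fin m) → ℕ → Matrix (Fin p) (Fin n) ℝ)
    (hW0 : ∀ ω, W ω 0 = 0)
    (hWt : ∀ ω (t : Fin T),
      W ω ((t : ℕ) + 1)
        = W ω (t : ℕ)
          - η • Matrix.vecMulVec (g (W ω (t : ℕ)) (ω t)) (A⁻¹ *ᵥ x (ω t))) :
    (∑ ω : Fin T → Fin m,
        (L ((T : ℝ)⁻¹ • ∑ t : Fin T, W ω (t : ℕ)) - L Wstar)) / (m : ℝ) ^ T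
      ≤ (σ * ρ / Real.sqrt T)
          * ((∑ i : Fin k, Real.sqrt (d (Fin.castLE hkn.le i)))
              + Real.sqrt (((n : ℝ) - (k : ℝ)) * (C.trace - Ck.trace))) := by
  classical
  have hT' : (0:ℝ) < T := by exact_mod_cast hT
  have hst : (0:ℝ) < Real.sqrt T := Real.sqrt_pos.mpr hT'
  have hm' : (0:ℝ) < m := by exact_mod_cast hm
  have hn : 0 < n := lt_of_le_of_lt (Nat.zero_le k) hkn
  have hmpow : (0:ℝ) < (m:ℝ) ^ T := by positivity
  -- σ is nonnegative
  have hσ0 : 0 ≤ σ := by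
    have h := hσ (fun _ => (1:ℝ))
    have h0 := le_trans (Real.sqrt_nonneg _) h
    have h1 : (0:ℝ) < Real.sqrt (∑ i : Fin n, ((1:ℝ)) ^ 2) := by
      apply Real.sqrt_pos.mpr
      have : (∑ _i : Fin n, ((1:ℝ)) ^ 2) = n := by simp
      rw [this]; exact_mod_cast hn
    nlinarith [h0, h1]
  rcases eq_or_lt_of_le hσ0 with hσz | hσpos
  · -- degenerate case σ = 0
    have hWs0 : Wstar = 0 := by
      ext r i
      have h := hσ (Pi.single i 1)
      rw [← hσz, zero_mul] at h
      have hnn : 0 ≤ ∑ j, ((Wstar *ᵥ Pi.single i 1) j) ^ 2 :=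
        Finset.sum_nonneg fun _ _ => sq_nonneg _
      have hs0 : (∑ j, ((Wstar *ᵥ Pi.single i 1) j) ^ 2) = 0 := by
        have := Real.sqrt_eq_zero'.mp (le_antisymm h (Real.sqrt_nonneg _))
        linarith
      have hterm := (Finset.sum_eq_zero_iff_of_nonneg
        (fun j _ => sq_nonneg ((Wstar *ᵥ Pi.single i 1) j))).mp hs0 r (Finset.mem_univ r)
      have hval : (Wstar *ᵥ Pi.single i 1) r = Wstar r i := by
        simp [Matrix.mulVec, dotProduct, Pi.single_apply]
      rw [hval] at hterm
      simpa using pow_eq_zero_iff (n := 2) (by norm_num) |>.mp hterm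
    have hη0 : η = 0 := by rw [hη, ← hσz, zero_div]
    have hWzero : ∀ ω (sN : ℕ), sN ≤ T → W ω sN = 0 := by
      intro ω sN
      induction sN with
      | zero => intro _; exact hW0 ω
      | succ s ih =>
        intro hsT
        have hlt : s < T := Nat.lt_of_succ_le hsT
        have e : W ω (s + 1) = W ω s
            - η • Matrix.vecMulVec (g (W ω s) (ω ⟨s, hlt⟩)) (A⁻¹ *ᵥ x (ω ⟨s, hlt⟩)) :=
          hWt ω ⟨s, hlt⟩
        rw [e, hη0, zero_smul, sub_zero]
        exact ih hlt.le
    have hzero : ∀ ω : Fin T → Fin m,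
        L ((T : ℝ)⁻¹ • ∑ t : Fin T, W ω (t : ℕ)) - L Wstar = 0 := by
      intro ω
      have hz : ∀ t : Fin T, W ω (t : ℕ) = 0 := fun t => hWzero ω _ t.isLt.le
      have hsum : (∑ t : Fin T, W ω (t : ℕ)) = 0 := by
        rw [Finset.sum_congr rfl (fun t _ => hz t)]
        simp
      rw [hsum, smul_zero, hWs0, sub_self]
    rw [Finset.sum_congr rfl (fun ω _ => hzero ω), Finset.sum_const, smul_zero]
    rw [← hσz]
    simp
  -- main case σ > 0
  have hηpos : 0 < η := by rw [hη]; positivity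
  obtain ⟨hAsymm, hAAinv, hAinvsymm, hquadA, hquadAi, hsigma, htrA, htrAinvC⟩ :=
    conditioner_facts hkn Wstar σ hσ C U hU d hCdec hlamk Q hQ Ck hCk htr B hBpsd hBsq a ha A hA
  set K : ℝ := (∑ i : Fin k, Real.sqrt (d (Fin.castLE hkn.le i)))
      + Real.sqrt (((n : ℝ) - (k : ℝ)) * (C.trace - Ck.trace)) with hK
  have hKnn : 0 ≤ Real.sqrt (((n : ℝ) - (k : ℝ)) * (C.trace - Ck.trace)) := Real.sqrt_nonneg _
  -- gradient norm bound
  have gbound : ∀ (W' : Matrix (Fin p) (Fin n) ℝ) (i : Fin m), (∑ j, (g W' i j) ^ 2) ≤ ρ ^ 2 := by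
    intro W' i
    have h1 := hg W' i (fun j => (W' *ᵥ x i) j + g W' i j)
    simp only [add_sub_cancel_left] at h1
    have h2 := hlip i (fun j => (W' *ᵥ x i) j + g W' i j) (W' *ᵥ x i)
    simp only [add_sub_cancel_left] at h2
    have hnn : 0 ≤ ∑ j, (g W' i j) ^ 2 := Finset.sum_nonneg fun _ _ => sq_nonneg _
    have h4 : (∑ j, (g W' i j) ^ 2) ≤ ρ * Real.sqrt (∑ j, (g W' i j) ^ 2) := by
      have hsq : (∑ j, g W' i j * g W' i j) = ∑ j, (g W' i j) ^ 2 := by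
        refine Finset.sum_congr rfl fun j _ => (sq (g W' i j)).symm ▸ rfl
      calc (∑ j, (g W' i j) ^ 2) = ∑ j, g W' i j * g W' i j := by
            exact (hsq).symm
        _ ≤ ℓ i (fun j => (W' *ᵥ x i) j + g W' i j) - ℓ i (W' *ᵥ x i) := by linarith
        _ ≤ ρ * Real.sqrt (∑ j, (g W' i j) ^ 2) := le_trans (le_abs_self _) h2
    exact sqrt_quad_bound hnn h4
  -- prefix dependence of the iterates
  have Wdep : ∀ (ω ω' : Fin T → Fin m) (sN : ℕ), sN ≤ T →
      (∀ u : Fin T, (u : ℕ) < sN → ω u = ω' u) → W ω sN = W ω' sN := by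
    intro ω ω' sN
    induction sN with
    | zero => intro _ _; rw [hW0, hW0]
    | succ s ih =>
      intro hsT hag
      have hlt : s < T := Nat.lt_of_succ_le hsT
      have e1 : W ω (s + 1) = W ω s
          - η • Matrix.vecMulVec (g (W ω s) (ω ⟨s, hlt⟩)) (A⁻¹ *ᵥ x (ω ⟨s, hlt⟩)) :=
        hWt ω ⟨s, hlt⟩
      have e2 : W ω' (s + 1) = W ω' s
          - η • Matrix.vecMulVec (g (W ω' s) (ω' ⟨s, hlt⟩)) (A⁻¹ *ᵥ x (ω' ⟨s, hlt⟩)) :=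
        hWt ω' ⟨s, hlt⟩
      rw [e1, e2, ih hlt.le (fun u hu => hag u (Nat.lt_succ_of_lt hu)),
        hag ⟨s, hlt⟩ (Nat.lt_succ_self s)]
  -- one step of SGD
  have step : ∀ (ω : Fin T → Fin m) (sn : ℕ) (h : sn < T),
      ((W ω (sn+1) - Wstar) * A * (W ω (sn+1) - Wstar)ᵀ).trace
        ≤ ((W ω sn - Wstar) * A * (W ω sn - Wstar)ᵀ).trace
          - 2*η*(ℓ (ω ⟨sn, h⟩) (W ω sn *ᵥ x (ω ⟨sn, h⟩))
                  - ℓ (ω ⟨sn, h⟩) (Wstar *ᵥ x (ω ⟨sn, h⟩)))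
          + η^2*ρ^2*(x (ω ⟨sn, h⟩) ⬝ᵥ (A⁻¹ *ᵥ x (ω ⟨sn, h⟩))) := by
    intro ω sn h
    set j : Fin m := ω ⟨sn, h⟩ with hj
    set Wc : Matrix (Fin p) (Fin n) ℝ := W ω sn with hWc
    set gt : Fin p → ℝ := g Wc j with hgt
    set y : Fin n → ℝ := A⁻¹ *ᵥ x j with hy
    have hupd : W ω (sn+1) - Wstar = (Wc - Wstar) - η • Matrix.vecMulVec gt y := by
      have e : W ω (sn + 1) = Wc - η • Matrix.vecMulVec gt y := hWt ω ⟨sn, h⟩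
      rw [e, sub_right_comm]
    rw [hupd, quad_expand A hAsymm (Wc - Wstar) (Matrix.vecMulVec gt y) η]
    have hAy : A *ᵥ y = x j := by
      rw [hy, Matrix.mulVec_mulVec, hAAinv, Matrix.one_mulVec]
    have hyA : y ᵥ* A = x j := by
      rw [← hAsymm, Matrix.vecMul_transpose, hAy]
    -- the inner-product term
    have hinner : (Matrix.vecMulVec gt y * A * (Wc - Wstar)ᵀ).trace
        = ∑ r, gt r * (((Wc - Wstar) *ᵥ x j) r) := by
      rw [Matrix.mul_assoc, trace_vmv]
      refine Finset.sum_congr rfl fun r _ => ?_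
      congr 1
      have hcol : ∀ i, (A * (Wc - Wstar)ᵀ) i r = (A *ᵥ (fun l => (Wc - Wstar) r l)) i := by
        intro i; simp [Matrix.mul_apply, Matrix.mulVec, dotProduct]
      calc ∑ i, y i * (A * (Wc - Wstar)ᵀ) i r
          = y ⬝ᵥ (A *ᵥ (fun l => (Wc - Wstar) r l)) := by
            simp only [dotProduct, hcol]
        _ = (y ᵥ* A) ⬝ᵥ (fun l => (Wc - Wstar) r l) := Matrix.dotProduct_mulVec y A _
        _ = ((Wc - Wstar) *ᵥ x j) r := by
            rw [hyA]; simp [Matrix.mulVec, dotProduct, mul_comm]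
    -- the gradient term
    have hgradsq : (Matrix.vecMulVec gt y * A * (Matrix.vecMulVec gt y)ᵀ).trace
        = (∑ r, (gt r)^2) * (x j ⬝ᵥ y) := by
      rw [Matrix.mul_assoc, trace_vmv]
      have hcol : ∀ i r, (A * (Matrix.vecMulVec gt y)ᵀ) i r = gt r * (A *ᵥ y) i := by
        intro i r
        simp only [Matrix.mul_apply, Matrix.transpose_apply, Matrix.vecMulVec_apply,
          Matrix.mulVec, dotProduct, Finset.mul_sum]
        exact Finset.sum_congr rfl fun l _ => by ring
      calc ∑ r, gt r * ∑ i, y i * (A * (Matrix.vecMulVec gt y)ᵀ) i r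
          = ∑ r, gt r * (gt r * (y ⬝ᵥ (A *ᵥ y))) := by
            refine Finset.sum_congr rfl fun r _ => ?_
            congr 1
            simp only [dotProduct, hcol, Finset.mul_sum]
            exact Finset.sum_congr rfl fun i _ => by ring
        _ = (∑ r, (gt r)^2) * (x j ⬝ᵥ y) := by
            rw [hAy, dotProduct_comm y (x j), Finset.sum_mul]
            exact Finset.sum_congr rfl fun r _ => by ring
    -- subgradient inequality
    have hDelta : ℓ j (Wc *ᵥ x j) - ℓ j (Wstar *ᵥ x j)
        ≤ ∑ r, gt r * (((Wc - Wstar) *ᵥ x j) r) := by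
      have hgg := hg Wc j (Wstar *ᵥ x j)
      have hsub : ∀ r, (((Wc - Wstar) *ᵥ x j) r)
          = (Wc *ᵥ x j) r - (Wstar *ᵥ x j) r := by
        intro r; rw [Matrix.sub_mulVec]; simp
      have e : ∑ r, gt r * (((Wc - Wstar) *ᵥ x j) r)
          = - ∑ r, gt r * ((Wstar *ᵥ x j) r - (Wc *ᵥ x j) r) := by
        rw [← Finset.sum_neg_distrib]
        exact Finset.sum_congr rfl fun r _ => by rw [hsub r]; ring
      rw [e]
      linarith [hgg]
    -- gradient bound
    have hcostnn : 0 ≤ x j ⬝ᵥ y := hquadAi (x j)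
    have hgb : (∑ r, (gt r)^2) * (x j ⬝ᵥ y) ≤ ρ^2 * (x j ⬝ᵥ y) :=
      mul_le_mul_of_nonneg_right (gbound Wc j) hcostnn
    rw [hinner, hgradsq]
    have k1 : 2*η*(ℓ j (Wc *ᵥ x j) - ℓ j (Wstar *ᵥ x j))
        ≤ 2*η*(∑ r, gt r * (((Wc - Wstar) *ᵥ x j) r)) :=
      mul_le_mul_of_nonneg_left hDelta (by positivity)
    have k2 : η^2 * ((∑ r, (gt r)^2) * (x j ⬝ᵥ y)) ≤ η^2 * (ρ^2 * (x j ⬝ᵥ y)) :=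
      mul_le_mul_of_nonneg_left hgb (sq_nonneg η)
    linarith [k1, k2]
  -- telescoping
  have tele : ∀ (ω : Fin T → Fin m) (sN : ℕ), sN ≤ T →
      ((W ω sN - Wstar) * A * (W ω sN - Wstar)ᵀ).trace
        ≤ (Wstar * A * Wstarᵀ).trace
          - 2*η*(∑ i ∈ Finset.range sN, if h : i < T then
              (ℓ (ω ⟨i, h⟩) (W ω i *ᵥ x (ω ⟨i, h⟩)) - ℓ (ω ⟨i, h⟩) (Wstar *ᵥ x (ω ⟨i, h⟩)))
              else 0)
          + η^2*ρ^2*(∑ i ∈ Finset.range sN, if h : i < T then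
              (x (ω ⟨i, h⟩) ⬝ᵥ (A⁻¹ *ᵥ x (ω ⟨i, h⟩))) else 0) := by
    intro ω sN
    induction sN with
    | zero =>
      intro _
      simp only [Finset.range_zero, Finset.sum_empty, mul_zero, sub_zero, add_zero]
      rw [hW0, zero_sub]
      have e : (-Wstar) * A * (-Wstar)ᵀ = Wstar * A * Wstarᵀ := by
        simp [Matrix.transpose_neg, Matrix.neg_mul, Matrix.mul_neg]
      rw [e]
    | succ sn ih =>
      intro hsT
      have hlt : sn < T := Nat.lt_of_succ_le hsT
      have hs := step ω sn hlt
      have hih := ih hlt.le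
      rw [Finset.sum_range_succ, Finset.sum_range_succ, dif_pos hlt, dif_pos hlt]
      linarith [hs, hih]
  -- per-trajectory bound
  have final : ∀ ω : Fin T → Fin m,
      2*η*(∑ t : Fin T, (ℓ (ω t) (W ω (t:ℕ) *ᵥ x (ω t)) - ℓ (ω t) (Wstar *ᵥ x (ω t))))
        ≤ (Wstar * A * Wstarᵀ).trace
          + η^2*ρ^2*(∑ t : Fin T, (x (ω t) ⬝ᵥ (A⁻¹ *ᵥ x (ω t)))) := by
    intro ω
    have h0 := tele ω T le_rfl
    have hnn := hquadA (W ω T - Wstar)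
    have c1 : (∑ i ∈ Finset.range T, if h : i < T then
          (ℓ (ω ⟨i, h⟩) (W ω i *ᵥ x (ω ⟨i, h⟩)) - ℓ (ω ⟨i, h⟩) (Wstar *ᵥ x (ω ⟨i, h⟩)))
          else 0)
        = ∑ t : Fin T, (ℓ (ω t) (W ω (t:ℕ) *ᵥ x (ω t)) - ℓ (ω t) (Wstar *ᵥ x (ω t))) := by
      rw [← Fin.sum_univ_eq_sum_range]
      exact Finset.sum_congr rfl fun t _ => by rw [dif_pos t.isLt]
    have c2 : (∑ i ∈ Finset.range T, if h : i < T then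
          (x (ω ⟨i, h⟩) ⬝ᵥ (A⁻¹ *ᵥ x (ω ⟨i, h⟩))) else 0)
        = ∑ t : Fin T, (x (ω t) ⬝ᵥ (A⁻¹ *ᵥ x (ω t))) := by
      rw [← Fin.sum_univ_eq_sum_range]
      exact Finset.sum_congr rfl fun t _ => by rw [dif_pos t.isLt]
    rw [c1, c2] at h0
    linarith [h0, hnn]
  -- expectation identities
  have expectΔ : ∀ t : Fin T,
      (∑ ω : Fin T → Fin m, (ℓ (ω t) (W ω (t:ℕ) *ᵥ x (ω t)) - ℓ (ω t) (Wstar *ᵥ x (ω t))))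
        = ∑ ω : Fin T → Fin m, (L (W ω (t:ℕ)) - L Wstar) := by
    intro t
    have hF : ∀ ω ω' : Fin T → Fin m, (∀ u, u ≠ t → ω u = ω' u) → ∀ j : Fin m,
        (ℓ j (W ω (t:ℕ) *ᵥ x j) - ℓ j (Wstar *ᵥ x j))
          = (ℓ j (W ω' (t:ℕ) *ᵥ x j) - ℓ j (Wstar *ᵥ x j)) := by
      intro ω ω' hag j
      rw [Wdep ω ω' (t:ℕ) t.isLt.le
        (fun u hu => hag u (fun he => lt_irrefl ((t:ℕ)) (he ▸ hu)))]
    have h1 := aux_avg t (fun ω j => ℓ j (W ω (t:ℕ) *ᵥ x j) - ℓ j (Wstar *ᵥ x j)) hF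
    have h2 : ∀ ω : Fin T → Fin m,
        (∑ j, (ℓ j (W ω (t:ℕ) *ᵥ x j) - ℓ j (Wstar *ᵥ x j)))
          = (m:ℝ) * (L (W ω (t:ℕ)) - L Wstar) := by
      intro ω
      rw [Finset.sum_sub_distrib, hL (W ω (t:ℕ)), hL Wstar]
      field_simp
    rw [Finset.sum_congr rfl (fun ω _ => h2 ω), ← Finset.mul_sum] at h1
    exact mul_left_cancel₀ (ne_of_gt hm') h1
  have hcard : ((Fintype.card (Fin T → Fin m) : ℕ) : ℝ) = (m:ℝ)^T := by
    simp [Fintype.card_fun]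
  have expectC : ∀ t : Fin T,
      (∑ ω : Fin T → Fin m, (x (ω t) ⬝ᵥ (A⁻¹ *ᵥ x (ω t))))
        = (m:ℝ)^T * (A⁻¹ * C).trace := by
    intro t
    have h1 := aux_avg t (fun (_ : Fin T → Fin m) (j : Fin m) => x j ⬝ᵥ (A⁻¹ *ᵥ x j))
      (fun _ _ _ _ => rfl)
    have hcostsum : (∑ j, x j ⬝ᵥ (A⁻¹ *ᵥ x j)) = (m:ℝ) * (A⁻¹ * C).trace := by
      have hCexp : A⁻¹ * C = (1/(m:ℝ)) • ∑ j, A⁻¹ * Matrix.vecMulVec (x j) (x j) := by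
        rw [hC, Matrix.mul_smul, Matrix.mul_sum]
      rw [hCexp, Matrix.trace_smul, Matrix.trace_sum,
        Finset.sum_congr rfl (fun j (_ : j ∈ Finset.univ) => trace_mul_vmv A⁻¹ hAinvsymm (x j)),
        smul_eq_mul]
      field_simp
    have h2 : (∑ _ω : Fin T → Fin m, ∑ j, x j ⬝ᵥ (A⁻¹ *ᵥ x j))
        = (m:ℝ) * ((m:ℝ)^T * (A⁻¹ * C).trace) := by
      rw [Finset.sum_const, Finset.card_univ, nsmul_eq_mul, hcard, hcostsum]
      ring
    rw [h2] at h1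
    exact mul_left_cancel₀ (ne_of_gt hm') h1
  -- Jensen
  have jensen : ∀ ω : Fin T → Fin m,
      L ((T:ℝ)⁻¹ • ∑ t : Fin T, W ω (t:ℕ)) - L Wstar
        ≤ (T:ℝ)⁻¹ * (∑ t : Fin T, (L (W ω (t:ℕ)) - L Wstar)) := by
    intro ω
    have hconvL : ∀ i : Fin m,
        ℓ i (((T:ℝ)⁻¹ • ∑ t : Fin T, W ω (t:ℕ)) *ᵥ x i)
          ≤ ∑ t : Fin T, (T:ℝ)⁻¹ * ℓ i (W ω (t:ℕ) *ᵥ x i) := by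
      intro i
      have hmv : ((T:ℝ)⁻¹ • ∑ t : Fin T, W ω (t:ℕ)) *ᵥ x i
          = ∑ t : Fin T, (T:ℝ)⁻¹ • (W ω (t:ℕ) *ᵥ x i) := by
        funext r
        simp only [Matrix.mulVec, dotProduct, Matrix.smul_apply, Finset.sum_apply,
          Pi.smul_apply, smul_eq_mul, Matrix.sum_apply, Finset.sum_mul, Finset.mul_sum,
          mul_assoc]
        rw [Finset.sum_comm]
      rw [hmv]
      have hsum1 : (∑ _t : Fin T, (T:ℝ)⁻¹) = 1 := by
        rw [Finset.sum_const, Finset.card_univ, Fintype.card_fin, nsmul_eq_mul]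
        field_simp
      have hj := (hconv i).map_sum_le (t := Finset.univ) (w := fun _ => (T:ℝ)⁻¹)
        (p := fun t : Fin T => W ω (t:ℕ) *ᵥ x i)
        (fun _ _ => by positivity) hsum1 (fun _ _ => Set.mem_univ _)
      simpa [smul_eq_mul] using hj
    have hL1 : L ((T:ℝ)⁻¹ • ∑ t : Fin T, W ω (t:ℕ))
        ≤ (T:ℝ)⁻¹ * ∑ t : Fin T, L (W ω (t:ℕ)) := by
      rw [hL]
      calc (1/(m:ℝ)) * ∑ i, ℓ i (((T:ℝ)⁻¹ • ∑ t : Fin T, W ω (t:ℕ)) *ᵥ x i)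
          ≤ (1/(m:ℝ)) * ∑ i, ∑ t : Fin T, (T:ℝ)⁻¹ * ℓ i (W ω (t:ℕ) *ᵥ x i) :=
            mul_le_mul_of_nonneg_left (Finset.sum_le_sum fun i _ => hconvL i) (by positivity)
        _ = (T:ℝ)⁻¹ * ∑ t : Fin T, L (W ω (t:ℕ)) := by
            rw [Finset.sum_comm, Finset.mul_sum, Finset.mul_sum]
            refine Finset.sum_congr rfl fun t _ => ?_
            rw [hL, ← Finset.mul_sum]
            ring
    have e : (T:ℝ)⁻¹ * (∑ t : Fin T, (L (W ω (t:ℕ)) - L Wstar))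
        = (T:ℝ)⁻¹ * (∑ t : Fin T, L (W ω (t:ℕ))) - L Wstar := by
      rw [Finset.sum_sub_distrib, Finset.sum_const, Finset.card_univ, Fintype.card_fin,
        nsmul_eq_mul, mul_sub]
      congr 1
      field_simp
    rw [e]
    linarith [hL1]
  -- assemble
  have hNWK : (Wstar * A * Wstarᵀ).trace ≤ σ^2 * K := hsigma.trans_eq (by rw [htrA])
  have htrACK : (A⁻¹ * C).trace = K := by rw [htrAinvC, htrA]
  have e1 : (∑ ω : Fin T → Fin m, ∑ t : Fin T, (L (W ω (t:ℕ)) - L Wstar))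
      = ∑ ω : Fin T → Fin m, ∑ t : Fin T,
          (ℓ (ω t) (W ω (t:ℕ) *ᵥ x (ω t)) - ℓ (ω t) (Wstar *ᵥ x (ω t))) := by
    rw [Finset.sum_comm,
      Finset.sum_congr rfl (fun t (_ : t ∈ Finset.univ) => (expectΔ t).symm)]
    exact Finset.sum_comm
  have e2 : (∑ ω : Fin T → Fin m, ∑ t : Fin T, (x (ω t) ⬝ᵥ (A⁻¹ *ᵥ x (ω t))))
      = (T:ℝ) * ((m:ℝ)^T * K) := by
    rw [Finset.sum_comm, Finset.sum_congr rfl (fun t (_ : t ∈ Finset.univ) => expectC t),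
      Finset.sum_const, Finset.card_univ, Fintype.card_fin, nsmul_eq_mul, htrACK]
  have sum_final : 2*η*(∑ ω : Fin T → Fin m, ∑ t : Fin T, (L (W ω (t:ℕ)) - L Wstar))
      ≤ (m:ℝ)^T * (Wstar * A * Wstarᵀ).trace + η^2*ρ^2*((T:ℝ) * ((m:ℝ)^T * K)) := by
    rw [e1, ← e2]
    calc 2*η*(∑ ω : Fin T → Fin m, ∑ t : Fin T,
            (ℓ (ω t) (W ω (t:ℕ) *ᵥ x (ω t)) - ℓ (ω t) (Wstar *ᵥ x (ω t))))
        = ∑ ω : Fin T → Fin m, 2*η*(∑ t : Fin T,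
            (ℓ (ω t) (W ω (t:ℕ) *ᵥ x (ω t)) - ℓ (ω t) (Wstar *ᵥ x (ω t)))) := by
          rw [Finset.mul_sum]
      _ ≤ ∑ ω : Fin T → Fin m, ((Wstar * A * Wstarᵀ).trace
            + η^2*ρ^2*(∑ t : Fin T, (x (ω t) ⬝ᵥ (A⁻¹ *ᵥ x (ω t))))) :=
          Finset.sum_le_sum fun ω _ => final ω
      _ = (m:ℝ)^T * (Wstar * A * Wstarᵀ).trace
            + η^2*ρ^2*(∑ ω : Fin T → Fin m, ∑ t : Fin T, (x (ω t) ⬝ᵥ (A⁻¹ *ᵥ x (ω t)))) := by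
          rw [Finset.sum_add_distrib, Finset.sum_const, Finset.card_univ, nsmul_eq_mul, hcard,
            ← Finset.mul_sum]
  have main2 : (∑ ω : Fin T → Fin m, (L ((T:ℝ)⁻¹ • ∑ t : Fin T, W ω (t:ℕ)) - L Wstar))
      ≤ (T:ℝ)⁻¹ * (∑ ω : Fin T → Fin m, ∑ t : Fin T, (L (W ω (t:ℕ)) - L Wstar)) := by
    rw [Finset.mul_sum]
    exact Finset.sum_le_sum fun ω _ => jensen ω
  have SΔbound : (∑ ω : Fin T → Fin m, ∑ t : Fin T, (L (W ω (t:ℕ)) - L Wstar))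
      ≤ (m:ℝ)^T * (σ^2*K + η^2*ρ^2*(T:ℝ)*K) / (2*η) := by
    rw [le_div_iff₀ (by positivity)]
    have b : (m:ℝ)^T * (Wstar * A * Wstarᵀ).trace ≤ (m:ℝ)^T * (σ^2*K) :=
      mul_le_mul_of_nonneg_left hNWK hmpow.le
    calc (∑ ω : Fin T → Fin m, ∑ t : Fin T, (L (W ω (t:ℕ)) - L Wstar)) * (2*η)
        = 2*η*(∑ ω : Fin T → Fin m, ∑ t : Fin T, (L (W ω (t:ℕ)) - L Wstar)) := by ring
      _ ≤ (m:ℝ)^T * (Wstar * A * Wstarᵀ).trace + η^2*ρ^2*((T:ℝ) * ((m:ℝ)^T * K)) := sum_final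
      _ ≤ (m:ℝ)^T * (σ^2*K) + η^2*ρ^2*((T:ℝ) * ((m:ℝ)^T * K)) := by linarith [b]
      _ = (m:ℝ)^T * (σ^2*K + η^2*ρ^2*(T:ℝ)*K) := by ring
  have Kfinal : (T:ℝ)⁻¹ * ((m:ℝ)^T * (σ^2*K + η^2*ρ^2*(T:ℝ)*K) / (2*η))
      = (m:ℝ)^T * ((σ*ρ/Real.sqrt T) * K) := by
    rw [hη]
    set st : ℝ := Real.sqrt (T:ℝ) with hstdef
    have h1 : st * st = (T:ℝ) := Real.mul_self_sqrt hT'.le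
    rw [show ((T:ℝ)) = st * st from h1.symm]
    have hstne : st ≠ 0 := ne_of_gt hst
    have hσne : σ ≠ 0 := ne_of_gt hσpos
    have hρne : ρ ≠ 0 := ne_of_gt hρ
    field_simp
    ring
  rw [div_le_iff₀ hmpow]
  calc (∑ ω : Fin T → Fin m, (L ((T:ℝ)⁻¹ • ∑ t : Fin T, W ω (t:ℕ)) - L Wstar))
      ≤ (T:ℝ)⁻¹ * (∑ ω : Fin T → Fin m, ∑ t : Fin T, (L (W ω (t:ℕ)) - L Wstar)) := main2
    _ ≤ (T:ℝ)⁻¹ * ((m:ℝ)^T * (σ^2*K + η^2*ρ^2*(T:ℝ)*K) / (2*η)) :=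
        mul_le_mul_of_nonneg_left SΔbound (by positivity)
    _ = (m:ℝ)^T * ((σ*ρ/Real.sqrt T) * K) := Kfinal
    _ = (σ*ρ/Real.sqrt T) * K * (m:ℝ)^T := by ring
end

section
/- Let C ∈ ℝ^{n×n} be symmetric positive semidefinite of the form C = X̄ X̄ᵀ, with rank(C) ≥ k, and let Q ∈ ℝ^{n×k} have orthonormal columns. Set C̃ = Qᵀ C Q and B = C̃^{1/2}. Then tr(B) = tr(B⁻¹ C̃) = tr(C̃^{1/2}), and tr(C̃^{1/2}) ≤ tr(C_k^{1/2}), where C_k is the best rank-k approximation of C. -/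
open Matrix BigOperators


private lemma dot_sum_left {n : ℕ} {ι : Type*} (s : Finset ι) (f : ι → (Fin n → ℝ))
    (g : Fin n → ℝ) : (∑ l ∈ s, f l) ⬝ᵥ g = ∑ l ∈ s, (f l) ⬝ᵥ g := by
  simp only [dotProduct, Finset.sum_apply, Finset.sum_mul]
  exact Finset.sum_comm

private lemma dot_sum_right {n : ℕ} {ι : Type*} (s : Finset ι) (f : ι → (Fin n → ℝ))
    (g : Fin n → ℝ) : g ⬝ᵥ (∑ l ∈ s, f l) = ∑ l ∈ s, g ⬝ᵥ (f l) := by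
  simp only [dotProduct, Finset.sum_apply, Finset.mul_sum]
  exact Finset.sum_comm

/-- Lemma 7 of the paper. Let `C = X̄ X̄ᵀ = U D Uᵀ`
(eigenvalues `d` decreasing) with `rank(C) ≥ k`, let `Q ∈ ℝ^{n×k}` have
orthonormal columns, set `C̃ = Qᵀ C Q` and let `B = C̃^{1/2}` (the positive
definite square root, invertible in this setting). Then
`tr(B) = tr(B⁻¹ C̃)` (both equal to `tr(C̃^{1/2}) = tr(B)`), and
`tr(C̃^{1/2}) ≤ tr(C_k^{1/2}) = Σ_{i<k} √λᵢ`. -/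
theorem stmt17 {n m k : ℕ} (hk : k ≤ n)
    (Xbar : Matrix (Fin n) (Fin m) ℝ)
    (C : Matrix (Fin n) (Fin n) ℝ) (hC : C = Xbar * Xbarᵀ)
    (hrank : k ≤ C.rank)
    (U : Matrix (Fin n) (Fin n) ℝ) (hU : Uᵀ * U = 1)
    (d : Fin n → ℝ) (hd : Antitone d)
    (hCdec : C = U * Matrix.diagonal d * Uᵀ)
    (Q : Matrix (Fin n) (Fin k) ℝ) (hQ : Qᵀ * Q = 1)
    (B : Matrix (Fin k) (Fin k) ℝ)
    (hB : B.PosDef) (hBsq : B * B = Qᵀ * C * Q) :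
    B.trace = (B⁻¹ * (Qᵀ * C * Q)).trace
      ∧ B.trace ≤ ∑ i : Fin k, Real.sqrt (d (Fin.castLE hk i)) := by
  classical
  have hdetB : IsUnit B.det := hB.det_pos.ne'.isUnit
  constructor
  · rw [← hBsq, ← mul_assoc, Matrix.nonsing_inv_mul B hdetB, one_mul]
  -- spectral data of B
  have hBh : B.IsHermitian := hB.1
  set b : Fin k → ℝ := hBh.eigenvalues with hbdef
  set v : Fin k → (Fin k → ℝ) := fun j => ⇑(hBh.eigenvectorBasis j) with hvdef
  have hbpos : ∀ j, 0 < b j := fun j => hB.eigenvalues_pos j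
  have hBv : ∀ j, B *ᵥ v j = b j • v j := fun j => hBh.mulVec_eigenvectorBasis j
  have hvv : ∀ j j', v j ⬝ᵥ v j' = if j = j' then 1 else 0 := by
    intro j j'
    have h := orthonormal_iff_ite.mp hBh.eigenvectorBasis.orthonormal j j'
    simpa [PiLp.inner_apply, RCLike.inner_apply, dotProduct, mul_comm] using h
  have htr : B.trace = ∑ j, b j := by
    conv_lhs => rw [hBh.spectral_theorem, Unitary.conjStarAlgAut_apply]
    rw [Matrix.trace_mul_cycle]
    simp [Matrix.trace_diagonal, Unitary.coe_star_mul_self]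
    rfl
  -- sorting permutation
  set σ : Equiv.Perm (Fin k) := Tuple.sort (fun j => -(b j)) with hσdef
  have hσmono : Monotone ((fun j => -(b j)) ∘ σ) := Tuple.monotone_sort _
  -- helpers
  have hdotQ : ∀ (a : Fin k → ℝ) (c : Fin n → ℝ), (Q *ᵥ a) ⬝ᵥ c = a ⬝ᵥ (Qᵀ *ᵥ c) := by
    intro a c
    rw [dotProduct_comm, Matrix.dotProduct_mulVec, ← Matrix.mulVec_transpose,
      dotProduct_comm]
  have hdotU : ∀ (a c : Fin n → ℝ), a ⬝ᵥ (U *ᵥ c) = (Uᵀ *ᵥ a) ⬝ᵥ c := by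
    intro a c
    rw [Matrix.dotProduct_mulVec, ← Matrix.mulVec_transpose]
  set w : Fin k → (Fin n → ℝ) := fun j => Q *ᵥ v j with hwdef
  have hww : ∀ j j', w j ⬝ᵥ w j' = if j = j' then 1 else 0 := by
    intro j j'
    calc w j ⬝ᵥ w j' = v j ⬝ᵥ (Qᵀ *ᵥ (Q *ᵥ v j')) := hdotQ _ _
      _ = v j ⬝ᵥ ((Qᵀ * Q) *ᵥ v j') := by rw [Matrix.mulVec_mulVec]
      _ = v j ⬝ᵥ v j' := by rw [hQ, Matrix.one_mulVec]
      _ = _ := hvv j j'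
  have hCw : ∀ j j', w j ⬝ᵥ (C *ᵥ w j') = if j = j' then b j' ^ 2 else 0 := by
    intro j j'
    calc w j ⬝ᵥ (C *ᵥ w j') = v j ⬝ᵥ (Qᵀ *ᵥ (C *ᵥ (Q *ᵥ v j'))) := hdotQ _ _
      _ = v j ⬝ᵥ ((Qᵀ * C * Q) *ᵥ v j') := by
          rw [Matrix.mulVec_mulVec, Matrix.mulVec_mulVec, Matrix.mul_assoc]
      _ = v j ⬝ᵥ ((B * B) *ᵥ v j') := by rw [← hBsq]
      _ = v j ⬝ᵥ (B *ᵥ (B *ᵥ v j')) := by rw [← Matrix.mulVec_mulVec]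
      _ = b j' ^ 2 * (v j ⬝ᵥ v j') := by
          rw [hBv, Matrix.mulVec_smul, hBv, dotProduct_smul, dotProduct_smul]
          simp [smul_eq_mul]; ring
      _ = _ := by rw [hvv]; split <;> simp
  -- the key eigenvalue comparison
  have key : ∀ i : Fin k, b (σ i) ≤ Real.sqrt (d (Fin.castLE hk i)) := by
    intro i
    set p : ℕ := (i : ℕ) with hpdef
    have hpk : p < k := i.isLt
    have hpn : p ≤ n := le_trans (le_of_lt hpk) hk
    set ι : Fin (p + 1) → Fin k := fun l => σ (Fin.castLE hpk l) with hιdef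
    have hιinj : Function.Injective ι := fun a a' h => by
      have := σ.injective h
      exact Fin.castLE_injective hpk this
    set M : Matrix (Fin p) (Fin (p + 1)) ℝ :=
      fun t l => (Uᵀ *ᵥ w (ι l)) (Fin.castLE hpn t) with hMdef
    obtain ⟨y, hy0, hMy⟩ : ∃ y : Fin (p + 1) → ℝ, y ≠ 0 ∧ M *ᵥ y = 0 := by
      by_contra h
      push_neg at h
      have hinj : Function.Injective M.mulVecLin := by
        rw [← LinearMap.ker_eq_bot]
        refine (Submodule.eq_bot_iff _).mpr fun y hy => ?_
        by_contra hy0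
        exact h y hy0 (by simpa [Matrix.mulVecLin_apply] using LinearMap.mem_ker.mp hy)
      have hle := LinearMap.finrank_le_finrank_of_injective hinj
      simp [Module.finrank_pi] at hle
    set x : Fin n → ℝ := ∑ l, y l • w (ι l) with hxdef
    set z : Fin n → ℝ := Uᵀ *ᵥ x with hzdef
    have hzlin : z = ∑ l, y l • (Uᵀ *ᵥ w (ι l)) := by
      rw [hzdef, hxdef]
      simp only [← Matrix.mulVecLin_apply, map_sum, _root_.map_smul]
    have hz0 : ∀ t : Fin n, (t : ℕ) < p → z t = 0 := by
      intro t ht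
      have h1 : (M *ᵥ y) ⟨(t : ℕ), ht⟩ = 0 := by rw [hMy]; rfl
      have hcast : Fin.castLE hpn ⟨(t : ℕ), ht⟩ = t := by ext; rfl
      rw [hzlin]
      simp only [Finset.sum_apply, Pi.smul_apply, smul_eq_mul]
      rw [Matrix.mulVec, dotProduct] at h1
      rw [← h1]
      refine Finset.sum_congr rfl fun l _ => ?_
      simp only [hMdef, hcast, mul_comm]
    -- expansions
    have hxx : x ⬝ᵥ x = ∑ l, y l ^ 2 := by
      rw [hxdef]
      simp only [dot_sum_left, dot_sum_right, smul_dotProduct,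
        dotProduct_smul, smul_eq_mul, hww, hιinj.eq_iff]
      refine Finset.sum_congr rfl fun l _ => ?_
      rw [Finset.sum_eq_single l] <;> simp +contextual [pow_two]
    have hCxlin : C *ᵥ x = ∑ l, y l • (C *ᵥ w (ι l)) := by
      rw [hxdef]
      simp only [← Matrix.mulVecLin_apply, map_sum, _root_.map_smul]
    have hxCx : x ⬝ᵥ (C *ᵥ x) = ∑ l, b (ι l) ^ 2 * y l ^ 2 := by
      rw [hCxlin, hxdef]
      simp only [dot_sum_left, dot_sum_right, smul_dotProduct,
        dotProduct_smul, smul_eq_mul, hCw, hιinj.eq_iff]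
      refine Finset.sum_congr rfl fun l _ => ?_
      rw [Finset.sum_eq_single l] <;> simp +contextual [pow_two]
      ring
    have hzCz : x ⬝ᵥ (C *ᵥ x) = ∑ t, d t * z t ^ 2 := by
      conv_lhs => rw [hCdec]
      rw [← Matrix.mulVec_mulVec, ← Matrix.mulVec_mulVec, hdotU, ← hzdef]
      simp [Matrix.mulVec_diagonal, dotProduct]
      exact Finset.sum_congr rfl fun t _ => by ring
    have hzz : ∑ t, z t ^ 2 = ∑ l, y l ^ 2 := by
      have h1 : z ⬝ᵥ z = x ⬝ᵥ x := by
        calc z ⬝ᵥ z = (Uᵀ *ᵥ x) ⬝ᵥ z := by rw [← hzdef]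
          _ = x ⬝ᵥ (U *ᵥ z) := (hdotU _ _).symm
          _ = x ⬝ᵥ ((U * Uᵀ) *ᵥ x) := by rw [hzdef, Matrix.mulVec_mulVec]
          _ = x ⬝ᵥ x := by rw [mul_eq_one_comm.mp hU, Matrix.one_mulVec]
      rw [← hxx, ← h1]
      simp [dotProduct, pow_two]
    have hS : 0 < ∑ l, y l ^ 2 := by
      obtain ⟨l0, hl0⟩ := Function.ne_iff.mp hy0
      exact Finset.sum_pos' (fun l _ => sq_nonneg _)
        ⟨l0, Finset.mem_univ _, sq_pos_of_ne_zero hl0⟩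
    have hlow : b (σ i) ^ 2 * (∑ l, y l ^ 2) ≤ x ⬝ᵥ (C *ᵥ x) := by
      rw [hxCx, Finset.mul_sum]
      refine Finset.sum_le_sum fun l _ => ?_
      have hle : Fin.castLE hpk l ≤ i := by
        rw [Fin.le_def]
        simpa using Nat.lt_succ_iff.mp l.isLt
      have h1 : b (σ i) ≤ b (ι l) := by
        have := hσmono hle
        simp only [Function.comp_apply] at this
        rw [hιdef]
        linarith
      have h2 : b (σ i) ^ 2 ≤ b (ι l) ^ 2 := pow_le_pow_left₀ (hbpos _).le h1 2
      exact mul_le_mul_of_nonneg_right h2 (sq_nonneg _)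
    have hup : x ⬝ᵥ (C *ᵥ x) ≤ d (Fin.castLE hk i) * (∑ l, y l ^ 2) := by
      rw [hzCz, ← hzz, Finset.mul_sum]
      refine Finset.sum_le_sum fun t _ => ?_
      by_cases ht : (t : ℕ) < p
      · rw [hz0 t ht]; simp
      · have hle : Fin.castLE hk i ≤ t := by
          rw [Fin.le_def]
          simpa [hpdef] using not_lt.mp ht
        exact mul_le_mul_of_nonneg_right (hd hle) (sq_nonneg _)
    have hfin : b (σ i) ^ 2 ≤ d (Fin.castLE hk i) := by
      have := hlow.trans hup
      exact le_of_mul_le_mul_right (by linarith [this]) hS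
    calc b (σ i) = Real.sqrt (b (σ i) ^ 2) := (Real.sqrt_sq (hbpos _).le).symm
      _ ≤ Real.sqrt (d (Fin.castLE hk i)) := Real.sqrt_le_sqrt hfin
  rw [htr, ← Equiv.sum_comp σ b]
  exact Finset.sum_le_sum fun i _ => key i
end
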